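/- Let X and Y be finite nonempty sets, let (W_s)_{s∈S} be an arbitrary family of channels from X to Y (i.e., for each s, W_s(x,·) is a probability distribution on Y for every x ∈ X), and let P be a probability distribution on X. Then for every δ > 0 there exists J_δ ∈ ℕ such that (W_s)_{s∈S} can be (δ,J_δ)-approximated under P. -/

import Mathlib

open MeasureTheory ProbabilityTheory ENNReal Filter

noncomputable section
open scoped Classical

/-- Kullback–Leibler divergence `D(μ‖ν) = ∫ log (dμ/dν) dμ`, valued in `[0,∞]`
(`∞` when the log-density is not integrable). -/
def KLdiv {Y : Type*} [MeasurableSpace Y] (μ ν : Measure Y) : ℝ≥0∞ :=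
  if Integrable (fun y => Real.log (μ.rnDeriv ν y).toReal) μ then
    ENNReal.ofReal (∫ y, Real.log (μ.rnDeriv ν y).toReal ∂μ)
  else ∞

/-- Rényi divergence `D_α(μ‖ν) = (α-1)⁻¹ log ∫ (dμ/dν)^α dν`, valued in `[0,∞]`,
`∞` when the integral is infinite (α>1) or zero (α<1). -/
def RenyiDiv {Y : Type*} [MeasurableSpace Y] (α : ℝ) (μ ν : Measure Y) : ℝ≥0∞ :=
  if (1 < α ∧ ∫⁻ y, μ.rnDeriv ν y ^ α ∂ν = ∞) ∨ (α < 1 ∧ ∫⁻ y, μ.rnDeriv ν y ^ α ∂ν = 0) then ∞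
  else ENNReal.ofReal ((α - 1)⁻¹ * Real.log (∫⁻ y, μ.rnDeriv ν y ^ α ∂ν).toReal)

/-- Output marginal `Q_{P,W} = ∫ W(x,·) dP(x)`. -/
def outputM {X Y : Type*} [MeasurableSpace X] [MeasurableSpace Y]
    (P : Measure X) (W : Kernel X Y) : Measure Y := P.bind (fun x => W x)

/-- Mutual information `I(P,W) = D(P ⊗ W ‖ P × Q_{P,W})`. -/
def mutInfo {X Y : Type*} [MeasurableSpace X] [MeasurableSpace Y]
    (P : Measure X) (W : Kernel X Y) : ℝ≥0∞ :=
  KLdiv (P.compProd W) (P.prod (outputM P W))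

/-- The defining property of a `(δ,J)`-approximating family `V` of the compound
channel `(W s)_{s ∈ S}` under input distribution `P`. -/
def ApproxFam {X Y S : Type*} [MeasurableSpace X] [MeasurableSpace Y]
    (P : Measure X) (W : S → Kernel X Y) (δ : ℝ) {J : ℕ} (V : Fin J → Kernel X Y) : Prop :=
  (∀ s : S, ∃ j : Fin J,
      (∫⁻ x, KLdiv (W s x) (V j x) ∂P) ≤ ENNReal.ofReal δ ∧
      (∃ α : ℝ, 1 < α ∧ ∀ x : X, RenyiDiv α (W s x) (V j x) < ∞) ∧
      mutInfo P (V j) - mutInfo P (W s) ≤ ENNReal.ofReal δ) ∧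
  (∀ j : Fin J, ∃ s : S, mutInfo P (W s) - mutInfo P (V j) ≤ ENNReal.ofReal δ)

/-- The compound channel `(W s)_{s ∈ S}` can be `(δ,J)`-approximated under `P`. -/
def CanApprox {X Y S : Type*} [MeasurableSpace X] [MeasurableSpace Y]
    (P : Measure X) (W : S → Kernel X Y) (δ : ℝ) (J : ℕ) : Prop :=
  ∃ V : Fin J → Kernel X Y, (∀ j, IsMarkovKernel (V j)) ∧ ApproxFam P W δ V

/-- The `(P,n,R)`-ensemble of random codebooks: `M` codewords drawn i.i.d. from `P^⊗n`. -/
def ensemble {X : Type*} [MeasurableSpace X] (P : Measure X) (n M : ℕ) :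
    Measure (Fin M → Fin n → X) :=
  Measure.pi (fun _ => Measure.pi (fun _ => P))

/-- The cost-constrained codebook: codewords violating `∑ c ≤ n C` are replaced by `(x₀,…,x₀)`. -/
def constrainCB {X : Type*} (c : X → ℝ) (Cmax : ℝ) (x₀ : X) {n M : ℕ}
    (cb : Fin M → Fin n → X) : Fin M → Fin n → X :=
  fun m => if ∑ j, c (cb m j) ≤ n * Cmax then cb m else fun _ => x₀

/-- Total variation norm `‖μ - ν‖` of the difference of two (finite) measures,
via the Jordan decomposition (`Measure.sub` is the positive part). -/
def tvDist {Z : Type*} [MeasurableSpace Z] (μ ν : Measure Z) : ℝ≥0∞ :=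
  (μ - ν) Set.univ + (ν - μ) Set.univ

/-! ### Auxiliary lemmas for the proof -/

section FAAaux
set_option linter.unusedSectionVars false

namespace FAA

variable {Z : Type*} [Fintype Z] [MeasurableSpace Z] [MeasurableSingletonClass Z]

lemma sum_singleton_meas (μ : Measure Z) : ∑ z, μ {z} = μ Set.univ := by
  have h := lintegral_fintype (μ := μ) (fun _ => (1 : ℝ≥0∞))
  simpa [lintegral_one] using h.symm

lemma ac_discrete {μ ν : Measure Z} (h : ∀ z, ν {z} = 0 → μ {z} = 0) : μ ≪ ν := by
  intro s hs
  have hz : ∀ z ∈ s, μ {z} = 0 := fun z hzs =>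
    h z (measure_mono_null (Set.singleton_subset_iff.2 hzs) hs)
  have : μ (⋃ z ∈ s, {z}) = 0 := (measure_biUnion_null_iff s.to_countable).2 hz
  simpa [Set.biUnion_of_singleton] using this

lemma withDensity_discrete (μ ν : Measure Z) [IsFiniteMeasure ν]
    (h : ∀ z, ν {z} = 0 → μ {z} = 0) :
    ν.withDensity (fun z => μ {z} / ν {z}) = μ := by
  apply Measure.ext_of_singleton
  intro z
  rw [withDensity_apply _ (measurableSet_singleton z), lintegral_singleton]
  rcases eq_or_ne (ν {z}) 0 with h0 | h0
  · simp [h0, h z h0]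
  · exact ENNReal.div_mul_cancel h0 (measure_ne_top ν _)

lemma rnDeriv_discrete (μ ν : Measure Z) [IsFiniteMeasure ν]
    (h : ∀ z, ν {z} = 0 → μ {z} = 0) :
    μ.rnDeriv ν =ᵐ[ν] fun z => μ {z} / ν {z} := by
  have hm : Measurable (fun z => μ {z} / ν {z}) := measurable_of_countable _
  have := Measure.rnDeriv_withDensity ν hm
  rwa [withDensity_discrete μ ν h] at this

lemma ae_all_of_pos (ν : Measure Z) (h : ∀ z, ν {z} ≠ 0) {p : Z → Prop}
    (hp : ∀ᵐ z ∂ν, p z) : ∀ z, p z := by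
  intro z
  by_contra hz
  have h0 : ν {z' | ¬ p z'} = 0 := hp
  exact h z (measure_mono_null (Set.singleton_subset_iff.2 hz) h0)

lemma KLdiv_le_of_ratio_le (μ ν : Measure Z) [IsProbabilityMeasure μ] [IsFiniteMeasure ν]
    {C : ℝ} (hC : 1 ≤ C) (h : ∀ z, μ {z} ≤ ENNReal.ofReal C * ν {z}) :
    KLdiv μ ν ≤ ENNReal.ofReal (Real.log C) := by
  have hac0 : ∀ z, ν {z} = 0 → μ {z} = 0 := fun z hz =>
    le_antisymm (by simpa [hz] using h z) zero_le
  have hac : μ ≪ ν := ac_discrete hac0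
  have hae : ∀ᵐ z ∂μ, μ.rnDeriv ν z = μ {z} / ν {z} :=
    (rnDeriv_discrete μ ν hac0).filter_mono hac.ae_le
  have hb : ∀ᵐ z ∂μ, Real.log (μ.rnDeriv ν z).toReal ≤ Real.log C := by
    filter_upwards [hae] with z hz
    rw [hz]
    have h1 : μ {z} / ν {z} ≤ ENNReal.ofReal C := by
      rcases eq_or_ne (ν {z}) 0 with h0 | h0
      · simp [h0, hac0 z h0]
      · rw [ENNReal.div_le_iff h0 (measure_ne_top ν _)]
        exact h z
    have h2 : (μ {z} / ν {z}).toReal ≤ C :=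
      ENNReal.toReal_le_of_le_ofReal (by linarith) h1
    rcases eq_or_ne (μ {z} / ν {z}).toReal 0 with h3 | h3
    · rw [h3, Real.log_zero]
      exact Real.log_nonneg hC
    · exact Real.log_le_log (lt_of_le_of_ne ENNReal.toReal_nonneg (Ne.symm h3)) h2
  have hInt : Integrable (fun z => Real.log (μ.rnDeriv ν z).toReal) μ := .of_finite
  rw [KLdiv, if_pos hInt]
  apply ENNReal.ofReal_le_ofReal
  calc ∫ z, Real.log (μ.rnDeriv ν z).toReal ∂μ
      ≤ ∫ _z, Real.log C ∂μ := integral_mono_ae hInt (integrable_const _) hb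
    _ = Real.log C := by simp

lemma RenyiDiv_two_lt_top (μ ν : Measure Z) [IsFiniteMeasure μ] [IsFiniteMeasure ν]
    (h : ∀ z, ν {z} ≠ 0) : RenyiDiv 2 μ ν < ∞ := by
  have hac0 : ∀ z, ν {z} = 0 → μ {z} = 0 := fun z hz => absurd hz (h z)
  have hrn : ∀ z, μ.rnDeriv ν z = μ {z} / ν {z} :=
    ae_all_of_pos ν h (rnDeriv_discrete μ ν hac0)
  have hL : ∫⁻ z, μ.rnDeriv ν z ^ (2:ℝ) ∂ν ≠ ∞ := by
    rw [lintegral_fintype]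
    refine (ENNReal.sum_lt_top.2 fun z _ => ?_).ne
    have hfin : μ.rnDeriv ν z ≠ ∞ := by
      rw [hrn z]
      exact (ENNReal.div_lt_top (measure_ne_top μ _) (h z)).ne
    exact ENNReal.mul_lt_top
      (ENNReal.rpow_lt_top_of_nonneg (by norm_num) hfin) (measure_lt_top ν _)
  rw [RenyiDiv, if_neg]
  · exact ENNReal.ofReal_lt_top
  · push_neg
    constructor
    · intro _; exact hL
    · intro h2; norm_num at h2

variable {X Y : Type*} [Fintype X] [Nonempty X] [Fintype Y] [Nonempty Y]
  [MeasurableSpace X] [DiscreteMeasurableSpace X]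
  [MeasurableSpace Y] [DiscreteMeasurableSpace Y]

/-- The mutual information functional as a real function of the transition matrix. -/
def Gfun (p : X → ℝ) (M : X → Y → ℝ) : ℝ :=
  (∑ y, Real.negMulLog (∑ x, p x * M x y)) - ∑ x, p x * ∑ y, Real.negMulLog (M x y)

lemma continuous_Gfun (p : X → ℝ) : Continuous (fun M : X → Y → ℝ => Gfun p M) := by
  unfold Gfun
  apply Continuous.sub
  · apply continuous_finset_sum
    intro y _
    exact Real.continuous_negMulLog.comp <| continuous_finset_sum _ fun x _ =>
      continuous_const.mul ((continuous_apply y).comp (continuous_apply x))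
  · apply continuous_finset_sum
    intro x _
    exact (continuous_const.mul <| continuous_finset_sum _ fun y _ =>
      Real.continuous_negMulLog.comp ((continuous_apply y).comp (continuous_apply x)))

lemma compProd_singleton (P : Measure X) [SFinite P] (κ : Kernel X Y) [IsMarkovKernel κ]
    (x : X) (y : Y) : (P.compProd κ) {(x, y)} = P {x} * κ x {y} := by
  rw [Measure.compProd_apply (measurableSet_singleton _)]
  have this : (fun x' => κ x' (Prod.mk x' ⁻¹' ({(x, y)} : Set (X × Y))))
      = Set.indicator ({x} : Set X) (fun x' => κ x' {y}) := by
    funext x'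
    by_cases hx : x' = x
    · subst hx
      rw [Set.indicator_apply, if_pos (Set.mem_singleton _)]
      congr 1
      ext z; simp [Prod.ext_iff]
    · rw [Set.indicator_apply, if_neg (by simpa using hx)]
      have : (Prod.mk x' ⁻¹' ({(x, y)} : Set (X × Y))) = ∅ := by
        ext z; simp [Prod.ext_iff, hx]
      simp [this]
  rw [this, lintegral_indicator (measurableSet_singleton x), lintegral_singleton, mul_comm]

lemma outputM_singleton (P : Measure X) [SFinite P] (κ : Kernel X Y) [IsMarkovKernel κ]
    (y : Y) : (outputM P κ) {y} = ∑ x, P {x} * κ x {y} := by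
  rw [outputM, Measure.bind_apply (measurableSet_singleton _) (Kernel.measurable κ).aemeasurable,
    lintegral_fintype]
  simp [mul_comm]

lemma prod_singleton (P : Measure X) [SFinite P] (Q : Measure Y) [SFinite Q]
    (x : X) (y : Y) : (P.prod Q) {(x, y)} = P {x} * Q {y} := by
  rw [← Set.singleton_prod_singleton, Measure.prod_prod]

lemma outputM_prob (P : Measure X) [IsProbabilityMeasure P]
    (κ : Kernel X Y) [IsMarkovKernel κ] : IsProbabilityMeasure (outputM P κ) := by
  constructor
  rw [outputM, Measure.bind_apply MeasurableSet.univ (Kernel.measurable κ).aemeasurable]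
  simp

lemma mutInfo_eq (P : Measure X) [IsProbabilityMeasure P] (κ : Kernel X Y) [IsMarkovKernel κ] :
    mutInfo P κ
      = ENNReal.ofReal (Gfun (fun x => (P {x}).toReal) (fun x y => (κ x {y}).toReal)) := by
  have hQprob : IsProbabilityMeasure (outputM P κ) := outputM_prob P κ
  set p : X → ℝ := fun x => (P {x}).toReal with hp
  set b : X → Y → ℝ := fun x y => (κ x {y}).toReal with hb
  set q : Y → ℝ := fun y => ((outputM P κ) {y}).toReal with hqdef
  set μ : Measure (X × Y) := P.compProd κ with hμ
  set ν : Measure (X × Y) := P.prod (outputM P κ) with hν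
  haveI : IsProbabilityMeasure μ := by rw [hμ]; infer_instance
  haveI : IsFiniteMeasure ν := by rw [hν]; infer_instance
  have hμs : ∀ x y, μ {(x, y)} = P {x} * κ x {y} := compProd_singleton P κ
  have hνs : ∀ x y, ν {(x, y)} = P {x} * (outputM P κ) {y} := fun x y =>
    prod_singleton P (outputM P κ) x y
  have hq : ∀ y, q y = ∑ x, p x * b x y := by
    intro y
    rw [hqdef]
    simp only [outputM_singleton P κ y]
    rw [ENNReal.toReal_sum (fun x _ => (ENNReal.mul_lt_top
      (measure_lt_top P _) (measure_lt_top _ _)).ne)]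
    exact Finset.sum_congr rfl fun x _ => ENNReal.toReal_mul
  have hac0 : ∀ z : X × Y, ν {z} = 0 → μ {z} = 0 := by
    rintro ⟨x, y⟩ h0
    rw [hνs] at h0
    rw [hμs]
    rcases mul_eq_zero.1 h0 with h | h
    · rw [h, zero_mul]
    · rw [outputM_singleton] at h
      exact Finset.sum_eq_zero_iff.1 h x (Finset.mem_univ x)
  have hac : μ ≪ ν := ac_discrete hac0
  have hae : ∀ᵐ z ∂μ, μ.rnDeriv ν z = μ {z} / ν {z} :=
    (rnDeriv_discrete μ ν hac0).filter_mono hac.ae_le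
  have hInt : Integrable (fun z => Real.log (μ.rnDeriv ν z).toReal) μ := .of_finite
  rw [mutInfo, KLdiv, ← hμ, ← hν, if_pos hInt]
  congr 1
  rw [integral_congr_ae (g := fun z => Real.log ((μ {z} / ν {z})).toReal)
    (hae.mono fun z hz => by rw [hz])]
  rw [integral_fintype .of_finite, Fintype.sum_prod_type]
  simp only [Measure.real]
  have hterm : ∀ x y, (μ {(x, y)}).toReal • Real.log ((μ {(x, y)} / ν {(x, y)}).toReal)
      = (p x * b x y) * Real.log ((p x * b x y) / (p x * q y)) := by
    intro x y
    rw [smul_eq_mul, hμs, hνs, ENNReal.toReal_div, ENNReal.toReal_mul, ENNReal.toReal_mul]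
  simp only [hterm]
  have hqge : ∀ x y, p x * b x y ≤ q y := by
    intro x y
    rw [hq y]
    exact Finset.single_le_sum (f := fun x' => p x' * b x' y)
      (fun x' _ => mul_nonneg ENNReal.toReal_nonneg ENNReal.toReal_nonneg) (Finset.mem_univ x)
  have claim : ∀ x y, (p x * b x y) * Real.log ((p x * b x y) / (p x * q y))
      = p x * (b x y * Real.log (b x y)) - p x * b x y * Real.log (q y) := by
    intro x y
    rcases eq_or_ne (p x) 0 with hp0 | hp0
    · simp [hp0]
    rcases eq_or_ne (b x y) 0 with hb0 | hb0
    · simp [hb0]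
    have hppos : 0 < p x := lt_of_le_of_ne ENNReal.toReal_nonneg (Ne.symm hp0)
    have hbpos : 0 < b x y := lt_of_le_of_ne ENNReal.toReal_nonneg (Ne.symm hb0)
    have hqpos : 0 < q y := lt_of_lt_of_le (by positivity) (hqge x y)
    rw [mul_div_mul_left _ _ (ne_of_gt hppos), Real.log_div hb0 (ne_of_gt hqpos)]
    ring
  simp only [claim]
  rw [Gfun]
  have hsplit : ∑ x, ∑ y, (p x * (b x y * Real.log (b x y)) - p x * b x y * Real.log (q y))
      = (∑ x, ∑ y, p x * (b x y * Real.log (b x y)))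
        - ∑ x, ∑ y, p x * b x y * Real.log (q y) := by
    rw [← Finset.sum_sub_distrib]
    exact Finset.sum_congr rfl fun x _ => Finset.sum_sub_distrib _ _
  rw [hsplit]
  have hA : ∀ x, ∑ y, p x * (b x y * Real.log (b x y))
      = -(p x * ∑ y, Real.negMulLog (b x y)) := by
    intro x
    rw [Finset.mul_sum, ← Finset.sum_neg_distrib]
    exact Finset.sum_congr rfl fun y _ => by simp only [Real.negMulLog]; ring
  have hB : ∑ x, ∑ y, p x * b x y * Real.log (q y) = -(∑ y, Real.negMulLog (q y)) := by
    rw [Finset.sum_comm, ← Finset.sum_neg_distrib]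
    refine Finset.sum_congr rfl fun y _ => ?_
    have : ∑ x, p x * b x y * Real.log (q y) = (∑ x, p x * b x y) * Real.log (q y) :=
      (Finset.sum_mul _ _ _).symm
    rw [this, ← hq y, Real.negMulLog]
    ring
  simp only [hA]
  rw [hB, Finset.sum_neg_distrib]
  have hqr : ∀ y, (∑ x, p x * b x y).negMulLog = (q y).negMulLog := fun y => by rw [← hq y]
  simp only [hqr]
  ring

/-- Uniform measure on a finite type. -/
def unifM (Y : Type*) [Fintype Y] [MeasurableSpace Y] : Measure Y :=
  ((Fintype.card Y : ℝ≥0∞))⁻¹ • Measure.count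

lemma unifM_singleton (y : Y) : unifM Y {y} = (Fintype.card Y : ℝ≥0∞)⁻¹ := by
  simp [unifM, Measure.count_singleton]

lemma unifM_univ : unifM Y Set.univ = 1 := by
  rw [← sum_singleton_meas]
  simp only [unifM_singleton, Finset.sum_const, Finset.card_univ, nsmul_eq_mul]
  exact ENNReal.mul_inv_cancel (by exact_mod_cast Fintype.card_ne_zero)
    (ENNReal.natCast_ne_top _)

/-- The `ε`-smoothing of a kernel with the uniform distribution. -/
def smoothedK (ε' : ℝ≥0∞) (κ : Kernel X Y) : Kernel X Y :=
  ⟨fun x => (1 - ε') • κ x + ε' • unifM Y, measurable_of_countable _⟩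

lemma smoothedK_apply (ε' : ℝ≥0∞) (κ : Kernel X Y) (x : X) :
    smoothedK ε' κ x = (1 - ε') • κ x + ε' • unifM Y := rfl

lemma smoothedK_singleton (ε' : ℝ≥0∞) (κ : Kernel X Y) (x : X) (y : Y) :
    smoothedK ε' κ x {y} = (1 - ε') * κ x {y} + ε' * (Fintype.card Y : ℝ≥0∞)⁻¹ := by
  rw [smoothedK_apply]
  simp [unifM_singleton]

lemma smoothedK_markov (ε' : ℝ≥0∞) (κ : Kernel X Y) [IsMarkovKernel κ] (hε' : ε' ≤ 1) :
    IsMarkovKernel (smoothedK ε' κ) := by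
  constructor
  intro x
  constructor
  rw [smoothedK_apply]
  simp only [Measure.add_apply, Measure.smul_apply, smul_eq_mul, measure_univ, unifM_univ,
    mul_one]
  exact tsub_add_cancel_of_le hε'

lemma smoothedK_singleton_ofReal (κ : Kernel X Y) [IsMarkovKernel κ]
    {ε : ℝ} (hε0 : 0 ≤ ε) (hε1 : ε ≤ 1) (x : X) (y : Y) :
    smoothedK (ENNReal.ofReal ε) κ x {y}
      = ENNReal.ofReal ((1 - ε) * (κ x {y}).toReal + ε * (Fintype.card Y : ℝ)⁻¹) := by
  rw [smoothedK_singleton]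
  have h1 : (1 : ℝ≥0∞) - ENNReal.ofReal ε = ENNReal.ofReal (1 - ε) := by
    rw [ENNReal.ofReal_sub _ hε0, ENNReal.ofReal_one]
  have h2 : κ x {y} = ENNReal.ofReal ((κ x {y}).toReal) :=
    (ENNReal.ofReal_toReal (measure_ne_top _ _)).symm
  have h3 : ((Fintype.card Y : ℝ≥0∞))⁻¹ = ENNReal.ofReal ((Fintype.card Y : ℝ)⁻¹) := by
    rw [ENNReal.ofReal_inv_of_pos (by exact_mod_cast Fintype.card_pos), ENNReal.ofReal_natCast]
  rw [h1, h3]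
  nth_rewrite 1 [h2]
  rw [← ENNReal.ofReal_mul (by linarith), ← ENNReal.ofReal_mul hε0,
    ← ENNReal.ofReal_add (mul_nonneg (by linarith) ENNReal.toReal_nonneg)
      (mul_nonneg hε0 (by positivity))]

end FAA

end FAAaux

set_option maxHeartbeats 3000000 in
theorem finite_alphabet_approximation
    {X Y S : Type*} [Fintype X] [Nonempty X] [Fintype Y] [Nonempty Y]
    [MeasurableSpace X] [DiscreteMeasurableSpace X]
    [MeasurableSpace Y] [DiscreteMeasurableSpace Y]
    (W : S → Kernel X Y) (hW : ∀ s, IsMarkovKernel (W s))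
    (P : Measure X) [IsProbabilityMeasure P] :
    ∀ δ : ℝ, 0 < δ → ∃ J : ℕ, CanApprox P W δ J := by
  intro δ hδ
  classical
  -- notation
  have hkpos' : 0 < Fintype.card Y := Fintype.card_pos
  set k : ℝ := (Fintype.card Y : ℝ) with hkdef
  have hkpos : 0 < k := by rw [hkdef]; exact_mod_cast hkpos'
  have hk1 : 1 ≤ k := by
    rw [hkdef]
    exact_mod_cast (Nat.one_le_iff_ne_zero.2 hkpos'.ne')
  have hkinv_pos : 0 < k⁻¹ := by positivity
  have hkinv_le : k⁻¹ ≤ 1 := by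
    rw [← one_div]
    exact (div_le_one hkpos).2 hk1
  set p : X → ℝ := fun x => (P {x}).toReal with hpdef
  set K : Set (X → Y → ℝ) :=
    {M | (∀ x y, M x y ∈ Set.Icc (0:ℝ) 1) ∧ ∀ x, ∑ y, M x y = 1} with hKdef
  -- compactness of K
  have hKclosed : IsClosed K := by
    have h1 : IsClosed {M : X → Y → ℝ | ∀ x y, M x y ∈ Set.Icc (0:ℝ) 1} := by
      have he : {M : X → Y → ℝ | ∀ x y, M x y ∈ Set.Icc (0:ℝ) 1}
          = ⋂ x, ⋂ y, {M : X → Y → ℝ | M x y ∈ Set.Icc (0:ℝ) 1} := by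
        ext M; simp [Set.mem_iInter]
      rw [he]
      exact isClosed_iInter fun x => isClosed_iInter fun y =>
        IsClosed.preimage ((continuous_apply y).comp (continuous_apply x)) isClosed_Icc
    have h2 : IsClosed {M : X → Y → ℝ | ∀ x, ∑ y, M x y = 1} := by
      have he : {M : X → Y → ℝ | ∀ x, ∑ y, M x y = 1}
          = ⋂ x, {M : X → Y → ℝ | ∑ y, M x y = 1} := by
        ext M; simp [Set.mem_iInter]
      rw [he]
      exact isClosed_iInter fun x => isClosed_eq
        (continuous_finset_sum _ fun y _ => (continuous_apply y).comp (continuous_apply x))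
        continuous_const
    rw [hKdef, Set.setOf_and]
    exact h1.inter h2
  have hKcpt : IsCompact K := by
    refine IsCompact.of_isClosed_subset
      (isCompact_univ_pi fun _ : X => isCompact_univ_pi fun _ : Y =>
        isCompact_Icc (a := (0:ℝ)) (b := 1)) hKclosed ?_
    intro M hM
    rw [Set.mem_univ_pi]
    intro x
    rw [Set.mem_univ_pi]
    intro y
    exact hM.1 x y
  -- uniform continuity of the mutual-information functional
  have hGuc : UniformContinuousOn (fun M => FAA.Gfun p M) K :=
    hKcpt.uniformContinuousOn_of_continuous (FAA.continuous_Gfun p).continuousOn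
  obtain ⟨η₀, hη₀pos, hGmod⟩ :=
    Metric.uniformContinuousOn_iff.1 hGuc (δ/2) (by linarith)
  -- choice of parameters
  set ε : ℝ := min (δ/3) (min (1/2) (η₀/2)) with hεdef
  have hεpos : 0 < ε := lt_min (by linarith) (lt_min (by norm_num) (by linarith))
  have hεδ3 : ε ≤ δ/3 := min_le_left _ _
  have hε12 : ε ≤ 1/2 := (min_le_right _ _).trans (min_le_left _ _)
  have hεη : ε ≤ η₀/2 := (min_le_right _ _).trans (min_le_right _ _)
  have hε1 : ε < 1 := by linarith
  set r : ℝ := min (ε^2/k) (η₀/2) with hrdef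
  have hrpos : 0 < r := lt_min (by positivity) (by linarith)
  have hrε : r ≤ ε^2/k := min_le_left _ _
  have hrη : r ≤ η₀/2 := min_le_right _ _
  -- matrices of the channels
  set F : S → X → Y → ℝ := fun s x y => (W s x {y}).toReal with hFdef
  have rowsum : ∀ s x, ∑ y, F s x y = 1 := by
    intro s x
    haveI := hW s
    rw [← ENNReal.toReal_sum (fun y _ => measure_ne_top _ _), FAA.sum_singleton_meas]
    simp
  have hFK : ∀ s, F s ∈ K := by
    intro s
    haveI := hW s
    refine ⟨fun x y => ⟨ENNReal.toReal_nonneg, ?_⟩, rowsum s⟩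
    have h1 : (W s x) {y} ≤ 1 := prob_le_one
    calc (W s x {y}).toReal ≤ (1 : ℝ≥0∞).toReal := ENNReal.toReal_mono one_ne_top h1
      _ = 1 := by simp
  -- finite net
  have hTB : TotallyBounded (Set.range F) :=
    hKcpt.totallyBounded.subset (Set.range_subset_iff.2 hFK)
  obtain ⟨t, htsub, htfin, htcov⟩ := totallyBounded_iff_subset.1 hTB
    {q : (X → Y → ℝ) × (X → Y → ℝ) | dist q.1 q.2 < r} (Metric.dist_mem_uniformity hrpos)
  set tF := htfin.toFinset with htFdef
  have hmemtF : ∀ m, m ∈ tF ↔ m ∈ t := fun m => htfin.mem_toFinset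
  have hchoice : ∀ m : {m // m ∈ tF}, ∃ s : S, F s = (m : X → Y → ℝ) :=
    fun m => htsub ((hmemtF m.1).1 m.2)
  choose σ hσ using hchoice
  set ε' : ℝ≥0∞ := ENNReal.ofReal ε with hε'def
  have hε'le : ε' ≤ 1 := by rw [hε'def]; exact ENNReal.ofReal_le_one.2 (by linarith)
  set Vk : Fin tF.card → Kernel X Y :=
    fun j => FAA.smoothedK ε' (W (σ (tF.equivFin.symm j))) with hVkdef
  have hVmark : ∀ j, IsMarkovKernel (Vk j) := fun j => by
    haveI := hW (σ (tF.equivFin.symm j))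
    exact FAA.smoothedK_markov _ _ hε'le
  -- the key estimates, for any `s` matched to a net point `m`
  have key : ∀ (s : S) (m : {m // m ∈ tF}), dist (F s) (F (σ m)) < r →
      ((∫⁻ x, KLdiv (W s x) (FAA.smoothedK ε' (W (σ m)) x) ∂P) ≤ ENNReal.ofReal δ) ∧
      (∀ x, RenyiDiv 2 (W s x) (FAA.smoothedK ε' (W (σ m)) x) < ∞) ∧
      (mutInfo P (FAA.smoothedK ε' (W (σ m))) - mutInfo P (W s) ≤ ENNReal.ofReal δ) ∧
      (mutInfo P (W s) - mutInfo P (FAA.smoothedK ε' (W (σ m))) ≤ ENNReal.ofReal δ) := by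
    intro s m hdist
    haveI := hW s
    haveI := hW (σ m)
    set V : Kernel X Y := FAA.smoothedK ε' (W (σ m)) with hVdef
    haveI : IsMarkovKernel V := FAA.smoothedK_markov _ _ hε'le
    set b : X → Y → ℝ := F (σ m) with hbdef
    have hb01 : ∀ x y, 0 ≤ b x y ∧ b x y ≤ 1 := by
      intro x y
      have := (hFK (σ m)).1 x y
      exact ⟨this.1, this.2⟩
    have hVs : ∀ x y, V x {y} = ENNReal.ofReal ((1 - ε) * b x y + ε * k⁻¹) := by
      intro x y
      rw [hVdef, hε'def, FAA.smoothedK_singleton_ofReal _ hεpos.le hε1.le]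
    -- entrywise closeness
    have hentry : ∀ x y, F s x y ≤ b x y + ε^2/k := by
      intro x y
      have h1 : dist (F s x y) (b x y) < r :=
        lt_of_le_of_lt ((dist_le_pi_dist (F s x) (b x) y).trans
          (dist_le_pi_dist (F s) b x)) hdist
      rw [Real.dist_eq] at h1
      have := (abs_lt.1 h1).2
      linarith [hrε]
    -- KL bound
    set C : ℝ := 1 + 3*ε with hCdef
    have hC1 : 1 ≤ C := by rw [hCdef]; linarith
    have hKL : ∀ x, KLdiv (W s x) (V x) ≤ ENNReal.ofReal δ := by
      intro x
      have hratio : ∀ y, (W s x) {y} ≤ ENNReal.ofReal C * V x {y} := by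
        intro y
        rw [hVs x y]
        have hFsy : (W s x) {y} = ENNReal.ofReal (F s x y) :=
          (ENNReal.ofReal_toReal (measure_ne_top _ _)).symm
        rw [hFsy, ← ENNReal.ofReal_mul (by linarith : (0:ℝ) ≤ C)]
        apply ENNReal.ofReal_le_ofReal
        have h1 := hentry x y
        have h2 := (hb01 x y).1
        have hd : ε^2/k = ε^2 * k⁻¹ := by ring
        nlinarith [mul_nonneg (mul_nonneg hεpos.le hεpos.le) h2,
          mul_nonneg hεpos.le hkinv_pos.le,
          mul_nonneg (mul_nonneg hεpos.le hεpos.le) hkinv_pos.le]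
      calc KLdiv (W s x) (V x) ≤ ENNReal.ofReal (Real.log C) :=
            FAA.KLdiv_le_of_ratio_le _ _ hC1 hratio
        _ ≤ ENNReal.ofReal δ := by
            apply ENNReal.ofReal_le_ofReal
            have := Real.log_le_sub_one_of_pos (show (0:ℝ) < C by linarith)
            rw [hCdef] at this ⊢
            linarith
    have hKLint : (∫⁻ x, KLdiv (W s x) (V x) ∂P) ≤ ENNReal.ofReal δ := by
      calc (∫⁻ x, KLdiv (W s x) (V x) ∂P) ≤ ∫⁻ _x, ENNReal.ofReal δ ∂P :=
            lintegral_mono fun x => hKL x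
        _ = ENNReal.ofReal δ := by simp
    -- Rényi
    have hRen : ∀ x, RenyiDiv 2 (W s x) (V x) < ∞ := by
      intro x
      refine FAA.RenyiDiv_two_lt_top _ _ (fun y => ?_)
      rw [hVs x y]
      refine (ENNReal.ofReal_pos.2 ?_).ne'
      have h2 := (hb01 x y).1
      nlinarith [mul_nonneg (sub_nonneg.2 hε1.le) h2, mul_pos hεpos hkinv_pos]
    -- mutual information bounds
    set Vm : X → Y → ℝ := fun x y => (1 - ε) * b x y + ε * k⁻¹ with hVmdef
    have hVmat : (fun x y => (V x {y}).toReal) = Vm := by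
      funext x y
      rw [hVs x y, ENNReal.toReal_ofReal]
      have h2 := (hb01 x y).1
      nlinarith [mul_nonneg (sub_nonneg.2 hε1.le) h2, mul_pos hεpos hkinv_pos]
    have hmiV : mutInfo P V = ENNReal.ofReal (FAA.Gfun p Vm) := by
      rw [FAA.mutInfo_eq P V, hVmat]
    have hmiW : ∀ s' : S, mutInfo P (W s') = ENNReal.ofReal (FAA.Gfun p (F s')) := by
      intro s'
      haveI := hW s'
      exact FAA.mutInfo_eq P (W s')
    have hVmK : Vm ∈ K := by
      constructor
      · intro x y
        have h2 := hb01 x y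
        have hVmxy : Vm x y = (1 - ε) * b x y + ε * k⁻¹ := rfl
        constructor
        · rw [hVmxy]
          nlinarith [mul_nonneg (sub_nonneg.2 hε1.le) h2.1, mul_pos hεpos hkinv_pos]
        · rw [hVmxy]
          nlinarith [mul_nonneg hεpos.le (sub_nonneg.2 hkinv_le)]
      · intro x
        have hrow : ∑ y, b x y = 1 := (hFK (σ m)).2 x
        rw [hVmdef]
        rw [Finset.sum_add_distrib, ← Finset.mul_sum, hrow, Finset.sum_const,
          Finset.card_univ, nsmul_eq_mul]
        rw [← hkdef]
        field_simp
        ring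
      -- rows sum to 1
    have hbK : b ∈ K := hFK (σ m)
    have hdistVb : dist Vm b ≤ ε := by
      refine (dist_pi_le_iff hεpos.le).2 fun x => (dist_pi_le_iff hεpos.le).2 fun y => ?_
      rw [Real.dist_eq]
      have h2 := hb01 x y
      have habs : (1 - ε) * b x y + ε * k⁻¹ - b x y = ε * (k⁻¹ - b x y) := by ring
      show |(1 - ε) * b x y + ε * k⁻¹ - b x y| ≤ ε
      rw [habs, abs_mul, abs_of_pos hεpos]
      have hle1 : |k⁻¹ - b x y| ≤ 1 := abs_le.2 ⟨by linarith, by linarith⟩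
      nlinarith
    have hg1 : dist (FAA.Gfun p Vm) (FAA.Gfun p b) < δ/2 :=
      hGmod Vm hVmK b hbK (lt_of_le_of_lt hdistVb (by linarith))
    have hg2 : dist (FAA.Gfun p (F s)) (FAA.Gfun p b) < δ/2 :=
      hGmod (F s) (hFK s) b hbK (lt_of_lt_of_le hdist (by linarith))
    have hgVFs : |FAA.Gfun p Vm - FAA.Gfun p (F s)| < δ := by
      rw [← Real.dist_eq]
      calc dist (FAA.Gfun p Vm) (FAA.Gfun p (F s))
          ≤ dist (FAA.Gfun p Vm) (FAA.Gfun p b) + dist (FAA.Gfun p b) (FAA.Gfun p (F s)) :=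
            dist_triangle _ _ _
        _ < δ/2 + δ/2 := add_lt_add hg1 (by rw [dist_comm]; exact hg2)
        _ = δ := by ring
    have hmono : ∀ u v : ℝ, u - v < δ →
        ENNReal.ofReal u - ENNReal.ofReal v ≤ ENNReal.ofReal δ := by
      intro u v huv
      rw [tsub_le_iff_right]
      calc ENNReal.ofReal u ≤ ENNReal.ofReal (v + δ) :=
            ENNReal.ofReal_le_ofReal (by linarith)
        _ ≤ ENNReal.ofReal v + ENNReal.ofReal δ := ENNReal.ofReal_add_le
        _ = ENNReal.ofReal δ + ENNReal.ofReal v := add_comm _ _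
    refine ⟨hKLint, hRen, ?_, ?_⟩
    · rw [hmiV, hmiW s]
      exact hmono _ _ (by have := (abs_lt.1 hgVFs).2; linarith)
    · rw [hmiV, hmiW s]
      exact hmono _ _ (by have := (abs_lt.1 hgVFs).1; linarith)
  -- assemble
  refine ⟨tF.card, Vk, hVmark, ?_, ?_⟩
  · -- every s is approximated
    intro s
    have hFs : F s ∈ ⋃ m ∈ t, {x | dist x m < r} := htcov (Set.mem_range_self s)
    simp only [Set.mem_iUnion, Set.mem_setOf_eq] at hFs
    obtain ⟨m, hmt, hdm⟩ := hFs
    set mm : {m // m ∈ tF} := ⟨m, (hmemtF m).2 hmt⟩ with hmmdef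
    refine ⟨tF.equivFin mm, ?_⟩
    have heq : tF.equivFin.symm (tF.equivFin mm) = mm := Equiv.symm_apply_apply _ _
    have hVkj : Vk (tF.equivFin mm) = FAA.smoothedK ε' (W (σ mm)) := by
      rw [hVkdef]
      simp only [heq]
    have hdist' : dist (F s) (F (σ mm)) < r := by
      rw [hσ mm]
      exact hdm
    obtain ⟨hKLint, hRen, hmi3, _⟩ := key s mm hdist'
    rw [hVkj]
    exact ⟨hKLint, ⟨2, one_lt_two, hRen⟩, hmi3⟩
  · -- every j is close to some s
    intro j
    set mm : {m // m ∈ tF} := tF.equivFin.symm j with hmmdef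
    refine ⟨σ mm, ?_⟩
    have hdist0 : dist (F (σ mm)) (F (σ mm)) < r := by
      rw [dist_self]; exact hrpos
    obtain ⟨_, _, _, h4⟩ := key (σ mm) mm hdist0
    have hVkj : Vk j = FAA.smoothedK ε' (W (σ mm)) := rfl
    rw [hVkj]
    exact h4
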